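/- Let a ∈ ℝ⁴₁, V(p) = a + ⟨a,p⟩p, and let γ be a unit-speed non-geodesic conformal trajectory of V on H³ with constant q ≠ 0 and ⟨γ(s), a⟩ = a₁ cosh s + a₂ sinh s. Then γ has constant curvature κ = |q|·√(|⟨a,a⟩ + a₁² − a₂²|). -/

import Mathlib

def ldot (u v : Fin 4 → ℝ) : ℝ := u 0 * v 0 + u 1 * v 1 + u 2 * v 2 - u 3 * v 3

def det4 (u v w p : Fin 4 → ℝ) : ℝ := (Matrix.of ![u, v, w, p]).det

lemma fs1 : (Fin.succ 2 : Fin 4) = 3 := rfl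
lemma fs2 : (Fin.succAbove 2 2 : Fin 4) = 3 := rfl
lemma fs3 : (Fin.succAbove 1 2 : Fin 4) = 3 := rfl
lemma fs4 : (Fin.succAbove 3 2 : Fin 4) = 2 := rfl

set_option maxHeartbeats 1000000 in
lemma det4_eq (u v w p : Fin 4 → ℝ) : det4 u v w p =
    u 0 * (v 1 * (w 2 * p 3 - w 3 * p 2) - v 2 * (w 1 * p 3 - w 3 * p 1) + v 3 * (w 1 * p 2 - w 2 * p 1))
  - u 1 * (v 0 * (w 2 * p 3 - w 3 * p 2) - v 2 * (w 0 * p 3 - w 3 * p 0) + v 3 * (w 0 * p 2 - w 2 * p 0))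
  + u 2 * (v 0 * (w 1 * p 3 - w 3 * p 1) - v 1 * (w 0 * p 3 - w 3 * p 0) + v 3 * (w 0 * p 1 - w 1 * p 0))
  - u 3 * (v 0 * (w 1 * p 2 - w 2 * p 1) - v 1 * (w 0 * p 2 - w 2 * p 0) + v 2 * (w 0 * p 1 - w 1 * p 0)) := by
  simp [det4, Matrix.det_succ_row_zero, Fin.sum_univ_succ, fs1, fs2, fs3, fs4]
  ring

lemma ldot_comm (u v : Fin 4 → ℝ) : ldot u v = ldot v u := by simp [ldot]; ring

lemma ldot_add_smul_left (a u b : Fin 4 → ℝ) (c : ℝ) :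
    ldot (a + c • u) b = ldot a b + c * ldot u b := by simp [ldot]; ring

lemma ldot_add_smul_right (x w u : Fin 4 → ℝ) (c : ℝ) :
    ldot x (w + c • u) = ldot x w + c * ldot x u := by simp [ldot]; ring

lemma ldot_smul_smul (x : Fin 4 → ℝ) (c : ℝ) :
    ldot (c • x) (c • x) = c^2 * ldot x x := by simp [ldot]; ring

lemma det4_third (V v w u : Fin 4 → ℝ) (c : ℝ) :
    det4 V v (w + c • u) u = det4 V v w u + c * det4 V v u u := by
  rw [det4_eq, det4_eq, det4_eq]; simp only [Pi.add_apply, Pi.smul_apply, smul_eq_mul]; ring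

lemma det4_uu (V v u : Fin 4 → ℝ) : det4 V v u u = 0 := by rw [det4_eq]; ring

set_option maxHeartbeats 2000000 in
lemma cross_norm (x y z : Fin 4 → ℝ) :
    (det4 x y ![1,0,0,0] z)^2 + (det4 x y ![0,1,0,0] z)^2 + (det4 x y ![0,0,1,0] z)^2
      - (det4 x y ![0,0,0,1] z)^2
    = -(ldot x x * (ldot y y * ldot z z - ldot y z ^ 2)
        - ldot x y * (ldot x y * ldot z z - ldot y z * ldot x z)
        + ldot x z * (ldot x y * ldot y z - ldot y y * ldot x z)) := by
  rw [det4_eq, det4_eq, det4_eq, det4_eq]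
  simp only [ldot, Matrix.cons_val_zero, Matrix.cons_val_one, Matrix.head_cons, Matrix.cons_val]
  norm_num
  ring

lemma spacelike (u x : Fin 4 → ℝ) (huu : ldot u u = -1) (hx : ldot x u = 0) :
    0 ≤ ldot x x := by
  simp only [ldot] at *
  have hp : x 0 * u 0 + x 1 * u 1 + x 2 * u 2 = x 3 * u 3 := by linarith
  have hp2 : (x 0 * u 0 + x 1 * u 1 + x 2 * u 2)^2 = x 3^2 * u 3^2 := by rw [hp]; ring
  have key : x 3^2 * u 3^2 ≤ (x 0^2 + x 1^2 + x 2^2) * (u 0^2 + u 1^2 + u 2^2) := by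
    nlinarith [hp2, sq_nonneg (x 0 * u 1 - x 1 * u 0), sq_nonneg (x 0 * u 2 - x 2 * u 0),
      sq_nonneg (x 1 * u 2 - x 2 * u 1)]
  have hU : u 3^2 = (u 0^2 + u 1^2 + u 2^2) + 1 := by nlinarith [huu]
  have hu1 : 1 ≤ u 3^2 := by nlinarith [sq_nonneg (u 0), sq_nonneg (u 1), sq_nonneg (u 2)]
  have hX0 : (0:ℝ) ≤ x 0^2 + x 1^2 + x 2^2 := by positivity
  nlinarith [key, hU, hu1, hX0, sq_nonneg (x 3)]

lemma hasDerivAt_ldot (γ : ℝ → Fin 4 → ℝ) (d b : Fin 4 → ℝ) (s : ℝ)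
    (h : HasDerivAt γ d s) : HasDerivAt (fun t => ldot (γ t) b) (ldot d b) s := by
  have hi : ∀ i, HasDerivAt (fun t => γ t i) (d i) s := fun i =>
    ((ContinuousLinearMap.proj i : (Fin 4 → ℝ) →L[ℝ] ℝ).hasFDerivAt.comp_hasDerivAt s h)
  have H := ((((hi 0).mul_const (b 0)).add ((hi 1).mul_const (b 1))).add
    ((hi 2).mul_const (b 2))).sub ((hi 3).mul_const (b 3))
  simp only [ldot]
  exact H

lemma hasDerivAt_ldot_self (γ : ℝ → Fin 4 → ℝ) (d : Fin 4 → ℝ) (s : ℝ)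
    (h : HasDerivAt γ d s) : HasDerivAt (fun t => ldot (γ t) (γ t)) (2 * ldot d (γ s)) s := by
  have hi : ∀ i, HasDerivAt (fun t => γ t i) (d i) s := fun i =>
    ((ContinuousLinearMap.proj i : (Fin 4 → ℝ) →L[ℝ] ℝ).hasFDerivAt.comp_hasDerivAt s h)
  have H := ((((hi 0).mul (hi 0)).add ((hi 1).mul (hi 1))).add
    ((hi 2).mul (hi 2))).sub ((hi 3).mul (hi 3))
  convert H using 1
  · rfl
  · rfl
  · rfl
  simp [ldot]; ring

/-- A non-geodesic unit-speed conformal trajectory on `H³` of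
`V(p) = a + ⟨a,p⟩p` with `⟨γ, a⟩ = a₁ cosh s + a₂ sinh s` has constant curvature
`κ = |q| √|⟨a,a⟩ + a₁² - a₂²|`. -/
theorem stmt13 (I : Set ℝ) (hI : IsOpen I) (hconv : Convex ℝ I)
    (a : Fin 4 → ℝ) (q a₁ a₂ : ℝ) (hq : q ≠ 0)
    (γ g g' X : ℝ → (Fin 4 → ℝ))
    (hd1 : ∀ s ∈ I, HasDerivAt γ (g s) s)
    (hd2 : ∀ s ∈ I, HasDerivAt g (g' s) s)
    (hhyp : ∀ s ∈ I, ldot (γ s) (γ s) = -1 ∧ 0 < γ s 3)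
    (hunit : ∀ s ∈ I, ldot (g s) (g s) = 1)
    (hXt : ∀ s ∈ I, ldot (X s) (γ s) = 0)
    (hX : ∀ s ∈ I, ∀ w, ldot w (γ s) = 0 →
      ldot (X s) w = det4 (a + ldot a (γ s) • γ s) (g s) w (γ s))
    (heq : ∀ s ∈ I, g' s - γ s = q • X s)
    (hgeo : ∃ s ∈ I, g' s - γ s ≠ 0)
    (hf : ∀ s ∈ I, ldot (γ s) a = a₁ * Real.cosh s + a₂ * Real.sinh s) :
    ∀ s ∈ I, Real.sqrt (ldot (g' s - γ s) (g' s - γ s))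
      = |q| * Real.sqrt |ldot a a + a₁ ^ 2 - a₂ ^ 2| := by
  -- ⟨g, γ⟩ = 0 on I
  have hvu : ∀ s ∈ I, ldot (g s) (γ s) = 0 := by
    intro s hs
    have h1 := hasDerivAt_ldot_self γ (g s) s (hd1 s hs)
    have h2 : HasDerivAt (fun t => ldot (γ t) (γ t)) 0 s := by
      refine (hasDerivAt_const s (-1:ℝ)).congr_of_eventuallyEq ?_
      filter_upwards [hI.mem_nhds hs] with t ht
      exact (hhyp t ht).1
    have := h1.unique h2
    linarith
  -- ⟨g, a⟩ = a₁ sinh + a₂ cosh on I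
  have hga : ∀ s ∈ I, ldot (g s) a = a₁ * Real.sinh s + a₂ * Real.cosh s := by
    intro s hs
    have h1 := hasDerivAt_ldot γ (g s) a s (hd1 s hs)
    have h2 : HasDerivAt (fun t => ldot (γ t) a) (a₁ * Real.sinh s + a₂ * Real.cosh s) s := by
      have h3 : HasDerivAt (fun t => a₁ * Real.cosh t + a₂ * Real.sinh t)
          (a₁ * Real.sinh s + a₂ * Real.cosh s) s :=
        ((Real.hasDerivAt_cosh s).const_mul a₁).add ((Real.hasDerivAt_sinh s).const_mul a₂)
      refine h3.congr_of_eventuallyEq ?_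
      filter_upwards [hI.mem_nhds hs] with t ht
      exact hf t ht
    exact h1.unique h2
  -- ⟨X, X⟩ is the constant ⟨a,a⟩ + a₁² − a₂²
  have hXX : ∀ s ∈ I, ldot (X s) (X s) = ldot a a + a₁ ^ 2 - a₂ ^ 2 := by
    intro s hs
    have huu := (hhyp s hs).1
    have hvv := hunit s hs
    have hvu0 := hvu s hs
    set A := ldot a (γ s) with hA
    -- ⟨X, w⟩ = det4 V g w γ for every w
    have claim : ∀ w, ldot (X s) w = det4 (a + A • γ s) (g s) w (γ s) := by
      intro w
      have hw : ldot (w + ldot w (γ s) • γ s) (γ s) = 0 := by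
        rw [ldot_add_smul_left, huu]; ring
      have h1 := hX s hs _ hw
      rw [ldot_add_smul_right, hXt s hs, det4_third, det4_uu] at h1
      linarith
    have hx0 : X s 0 = det4 (a + A • γ s) (g s) ![1,0,0,0] (γ s) := by
      have := claim ![1,0,0,0]; simp [ldot] at this; linarith
    have hx1 : X s 1 = det4 (a + A • γ s) (g s) ![0,1,0,0] (γ s) := by
      have := claim ![0,1,0,0]; simp [ldot] at this; linarith
    have hx2 : X s 2 = det4 (a + A • γ s) (g s) ![0,0,1,0] (γ s) := by
      have := claim ![0,0,1,0]; simp [ldot] at this; linarith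
    have hx3 : X s 3 = -det4 (a + A • γ s) (g s) ![0,0,0,1] (γ s) := by
      have := claim ![0,0,0,1]; simp [ldot] at this; linarith
    have hXXval : ldot (X s) (X s)
        = (det4 (a + A • γ s) (g s) ![1,0,0,0] (γ s))^2
        + (det4 (a + A • γ s) (g s) ![0,1,0,0] (γ s))^2
        + (det4 (a + A • γ s) (g s) ![0,0,1,0] (γ s))^2
        - (det4 (a + A • γ s) (g s) ![0,0,0,1] (γ s))^2 := by
      simp only [ldot]; rw [hx0, hx1, hx2, hx3]; ring
    rw [hXXval, cross_norm]
    have hVV : ldot (a + A • γ s) (a + A • γ s) = ldot a a + A ^ 2 := by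
      rw [ldot_add_smul_left, ldot_add_smul_right, ldot_add_smul_right, huu,
        ldot_comm (γ s) a]
      ring
    have hVv : ldot (a + A • γ s) (g s) = ldot a (g s) := by
      rw [ldot_add_smul_left, ldot_comm (γ s) (g s), hvu0]; ring
    have hVu : ldot (a + A • γ s) (γ s) = 0 := by
      rw [ldot_add_smul_left, huu, hA]; ring
    rw [hVV, hVv, hVu, hvv, hvu0, huu]
    have hA' : A = a₁ * Real.cosh s + a₂ * Real.sinh s := by
      rw [hA, ldot_comm]; exact hf s hs
    have hag : ldot a (g s) = a₁ * Real.sinh s + a₂ * Real.cosh s := by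
      rw [ldot_comm]; exact hga s hs
    have hch := Real.cosh_sq_sub_sinh_sq s
    rw [hA', hag]
    ring_nf
    nlinarith [hch]
  -- nonnegativity of the constant
  obtain ⟨s₀, hs₀, -⟩ := hgeo
  have hM : 0 ≤ ldot a a + a₁ ^ 2 - a₂ ^ 2 := by
    rw [← hXX s₀ hs₀]
    exact spacelike (γ s₀) (X s₀) (hhyp s₀ hs₀).1 (hXt s₀ hs₀)
  intro s hs
  rw [heq s hs, ldot_smul_smul, hXX s hs, abs_of_nonneg hM,
    Real.sqrt_mul (sq_nonneg q), Real.sqrt_sq_eq_abs]
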